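/- Let B be an n×m real matrix and R an m×m real symmetric positive definite matrix. The map M ↦ g(B,R,M) := M − M B (Bᵀ M B + R)⁻¹ Bᵀ M is matrix-concave on the cone of symmetric positive semidefinite matrices: for all n×n symmetric positive semidefinite matrices M₁, M₂ and all λ ∈ [0,1], g(B,R, λM₁ + (1−λ)M₂) ⪰ λ g(B,R,M₁) + (1−λ) g(B,R,M₂) in the Loewner order. -/

import Mathlib

open Matrix

/-- The Riccati-type update `g(B,R,M) = M − M B (Bᵀ M B + R)⁻¹ Bᵀ M`. -/
noncomputable def g {n m : ℕ} (B : Matrix (Fin n) (Fin m) ℝ)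
    (R : Matrix (Fin m) (Fin m) ℝ) (M : Matrix (Fin n) (Fin n) ℝ) :
    Matrix (Fin n) (Fin n) ℝ :=
  M - M * B * (Bᵀ * M * B + R)⁻¹ * Bᵀ * M

namespace GConcaveAux

variable {n m : ℕ}

/-- The affine-in-`M` majorant `f M K = (1 - K Bᵀ) M (1 - K Bᵀ)ᵀ + K R Kᵀ`. -/
noncomputable def f (B : Matrix (Fin n) (Fin m) ℝ) (R : Matrix (Fin m) (Fin m) ℝ)
    (M : Matrix (Fin n) (Fin n) ℝ) (K : Matrix (Fin n) (Fin m) ℝ) :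
    Matrix (Fin n) (Fin n) ℝ :=
  (1 - K * Bᵀ) * M * (1 - K * Bᵀ)ᵀ + K * R * Kᵀ

lemma smul_posSemidef {c : ℝ} (hc : 0 ≤ c) {A : Matrix (Fin n) (Fin n) ℝ}
    (hA : A.PosSemidef) : (c • A).PosSemidef := by
  refine ⟨?_, fun x => ?_⟩
  · unfold Matrix.IsHermitian
    rw [conjTranspose_smul, hA.1]
    simp
  · exact (hA.smul hc).2 x

lemma S_posDef (B : Matrix (Fin n) (Fin m) ℝ) {R : Matrix (Fin m) (Fin m) ℝ}
    (hR : R.PosDef) {M : Matrix (Fin n) (Fin n) ℝ} (hM : M.PosSemidef) :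
    (Bᵀ * M * B + R).PosDef := by
  have h1 : (Bᵀ * M * B).PosSemidef := by
    have := hM.conjTranspose_mul_mul_same B
    rwa [conjTranspose_eq_transpose_of_trivial] at this
  exact Matrix.PosDef.posSemidef_add h1 hR

/-- Abstract form of the completion-of-squares identity, with `S = Bᵀ M B + R`
and `W = S⁻¹` treated as opaque matrices. -/
lemma abstract_identity (B K : Matrix (Fin n) (Fin m) ℝ)
    (M : Matrix (Fin n) (Fin n) ℝ) (R S W : Matrix (Fin m) (Fin m) ℝ)
    (hM : Mᵀ = M) (hW : Wᵀ = W) (hS : S = Bᵀ * M * B + R)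
    (h1 : W * S = 1) (h2 : S * W = 1) :
    ((1 - K * Bᵀ) * M * (1 - K * Bᵀ)ᵀ + K * R * Kᵀ) - (M - M * B * W * Bᵀ * M)
      = (K - M * B * W) * S * (K - M * B * W)ᵀ := by
  have c1 : ∀ X : Matrix (Fin m) (Fin n) ℝ, W * (S * X) = X := fun X => by
    rw [← Matrix.mul_assoc, h1, Matrix.one_mul]
  have c2 : ∀ X : Matrix (Fin m) (Fin n) ℝ, S * (W * X) = X := fun X => by
    rw [← Matrix.mul_assoc, h2, Matrix.one_mul]
  simp only [transpose_sub, transpose_mul, transpose_one, transpose_transpose,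
    hW, hM, Matrix.mul_sub, Matrix.sub_mul, Matrix.mul_add, Matrix.add_mul,
    Matrix.one_mul, Matrix.mul_one, Matrix.mul_assoc, c1, c2]
  rw [hS]
  simp only [Matrix.add_mul, Matrix.mul_add, Matrix.mul_assoc]
  abel

/-- Key algebraic identity: `f M K - g M = D S Dᵀ` with `D = K - M B S⁻¹`. -/
lemma f_sub_g (B : Matrix (Fin n) (Fin m) ℝ) {R : Matrix (Fin m) (Fin m) ℝ}
    (hR : R.PosDef) {M : Matrix (Fin n) (Fin n) ℝ} (hM : M.PosSemidef)
    (K : Matrix (Fin n) (Fin m) ℝ) :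
    f B R M K - g B R M
      = (K - M * B * (Bᵀ * M * B + R)⁻¹) * (Bᵀ * M * B + R)
          * (K - M * B * (Bᵀ * M * B + R)⁻¹)ᵀ := by
  have hSpd : (Bᵀ * M * B + R).PosDef := S_posDef B hR hM
  have hdet : IsUnit (Bᵀ * M * B + R).det := hSpd.det_pos.ne'.isUnit
  have hMsymm : Mᵀ = M := by
    have := hM.isHermitian.eq
    rwa [conjTranspose_eq_transpose_of_trivial] at this
  have hSsymm : (Bᵀ * M * B + R)ᵀ = Bᵀ * M * B + R := by
    have := hSpd.isHermitian.eq
    rwa [conjTranspose_eq_transpose_of_trivial] at this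
  have hWsymm : ((Bᵀ * M * B + R)⁻¹)ᵀ = (Bᵀ * M * B + R)⁻¹ := by
    rw [transpose_nonsing_inv, hSsymm]
  exact abstract_identity B K M R _ _ hMsymm hWsymm rfl
    (nonsing_inv_mul _ hdet) (mul_nonsing_inv _ hdet)

lemma f_posSemidef_sub (B : Matrix (Fin n) (Fin m) ℝ) {R : Matrix (Fin m) (Fin m) ℝ}
    (hR : R.PosDef) {M : Matrix (Fin n) (Fin n) ℝ} (hM : M.PosSemidef)
    (K : Matrix (Fin n) (Fin m) ℝ) :
    (f B R M K - g B R M).PosSemidef := by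
  rw [f_sub_g B hR hM K]
  have := (S_posDef B hR hM).posSemidef.mul_mul_conjTranspose_same
    (K - M * B * (Bᵀ * M * B + R)⁻¹)
  rwa [conjTranspose_eq_transpose_of_trivial] at this

lemma f_optimal (B : Matrix (Fin n) (Fin m) ℝ) {R : Matrix (Fin m) (Fin m) ℝ}
    (hR : R.PosDef) {M : Matrix (Fin n) (Fin n) ℝ} (hM : M.PosSemidef) :
    f B R M (M * B * (Bᵀ * M * B + R)⁻¹) = g B R M := by
  have h := f_sub_g B hR hM (M * B * (Bᵀ * M * B + R)⁻¹)
  rw [sub_self] at h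
  simp only [Matrix.zero_mul] at h
  exact sub_eq_zero.mp h

lemma f_affine (B : Matrix (Fin n) (Fin m) ℝ) (R : Matrix (Fin m) (Fin m) ℝ)
    (M₁ M₂ : Matrix (Fin n) (Fin n) ℝ) (K : Matrix (Fin n) (Fin m) ℝ) (lam : ℝ) :
    f B R (lam • M₁ + (1 - lam) • M₂) K
      = lam • f B R M₁ K + (1 - lam) • f B R M₂ K := by
  unfold f
  rw [Matrix.mul_add, Matrix.add_mul, Matrix.mul_smul, Matrix.mul_smul,
    Matrix.smul_mul, Matrix.smul_mul, smul_add, smul_add]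
  module

end GConcaveAux

/-- matrix concavity of `M ↦ g(B,R,M)` on the positive semidefinite cone:
for `M₁, M₂ ⪰ 0` and `λ ∈ [0,1]`,
`g(B,R, λM₁ + (1−λ)M₂) ⪰ λ g(B,R,M₁) + (1−λ) g(B,R,M₂)`. -/
theorem g_concave {n m : ℕ}
    (B : Matrix (Fin n) (Fin m) ℝ) (R : Matrix (Fin m) (Fin m) ℝ)
    (hR : R.PosDef)
    (M₁ M₂ : Matrix (Fin n) (Fin n) ℝ)
    (hM₁ : M₁.PosSemidef) (hM₂ : M₂.PosSemidef)
    (lam : ℝ) (hlam₀ : 0 ≤ lam) (hlam₁ : lam ≤ 1) :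
    (g B R (lam • M₁ + (1 - lam) • M₂)
      - (lam • g B R M₁ + (1 - lam) • g B R M₂)).PosSemidef := by
  open GConcaveAux in
  have hMl : (lam • M₁ + (1 - lam) • M₂).PosSemidef :=
    (GConcaveAux.smul_posSemidef hlam₀ hM₁).add
      (GConcaveAux.smul_posSemidef (by linarith) hM₂)
  set Ml := lam • M₁ + (1 - lam) • M₂ with hMl'
  set K := Ml * B * (Bᵀ * Ml * B + R)⁻¹ with hK
  have hopt : GConcaveAux.f B R Ml K = g B R Ml := GConcaveAux.f_optimal B hR hMl
  have h1 : (GConcaveAux.f B R M₁ K - g B R M₁).PosSemidef :=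
    GConcaveAux.f_posSemidef_sub B hR hM₁ K
  have h2 : (GConcaveAux.f B R M₂ K - g B R M₂).PosSemidef :=
    GConcaveAux.f_posSemidef_sub B hR hM₂ K
  have haff := GConcaveAux.f_affine B R M₁ M₂ K lam
  have key : g B R Ml - (lam • g B R M₁ + (1 - lam) • g B R M₂)
      = lam • (GConcaveAux.f B R M₁ K - g B R M₁)
        + (1 - lam) • (GConcaveAux.f B R M₂ K - g B R M₂) := by
    rw [← hopt, haff]
    module
  rw [key]
  exact (GConcaveAux.smul_posSemidef hlam₀ h1).add
    (GConcaveAux.smul_posSemidef (by linarith) h2)
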